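/- In Cl_4, for all real numbers μ₁₂, λ₁₂, μ₁₃ one has (μ₁₂ • (e₃*e₁*e₂) + λ₁₂ • (e₄*e₁*e₂) + μ₁₃ • (e₄*e₁*e₃))^2 = (μ₁₂² + λ₁₂² + μ₁₃²) • 1; consequently, if (μ₁₂, λ₁₂, μ₁₃) ≠ (0,0,0) then μ₁₂ • (e₃*e₁*e₂) + λ₁₂ • (e₄*e₁*e₂) + μ₁₃ • (e₄*e₁*e₃) is a unit of Cl_4. (This element is 4× the invariant Dirac operator of a metric on the 4-dimensional filiform nilpotent Lie algebra L₄ = (0,0,12,13); the identity 16 D̸² = (μ₁₂²+μ₁₃²+λ₁₂²)·Id proves that 4-dimensional non-abelian nilmanifolds have no left-invariant harmonic spinors.) -/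

import Mathlib

open scoped BigOperators

/-- The negative-definite quadratic form `Q v = -∑ i, (v i)^2` on `EuclideanSpace ℝ (Fin n)`. -/
noncomputable def Q (n : ℕ) : QuadraticForm ℝ (EuclideanSpace ℝ (Fin n)) :=
  QuadraticMap.ofPolar (fun v => -∑ i, v i ^ 2)
    (fun a v => by
      simp only [PiLp.smul_apply, smul_eq_mul, mul_pow]
      rw [← Finset.mul_sum]
      ring)
    (fun x x' y => by
      have h : ∀ (u w : EuclideanSpace ℝ (Fin n)),
          QuadraticMap.polar (fun v : EuclideanSpace ℝ (Fin n) => -∑ i, v i ^ 2) u w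
            = -(2 * ∑ i, u i * w i) := by
        intro u w
        have hsq : ∀ i, (u i + w i) ^ 2 = u i ^ 2 + w i ^ 2 + 2 * (u i * w i) := fun i => by ring
        simp_rw [QuadraticMap.polar, PiLp.add_apply, hsq, Finset.sum_add_distrib,
          ← Finset.mul_sum]
        ring
      simp_rw [h, PiLp.add_apply, add_mul, Finset.sum_add_distrib]
      ring)
    (fun a x y => by
      have h : ∀ (u w : EuclideanSpace ℝ (Fin n)),
          QuadraticMap.polar (fun v : EuclideanSpace ℝ (Fin n) => -∑ i, v i ^ 2) u w
            = -(2 * ∑ i, u i * w i) := by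
        intro u w
        have hsq : ∀ i, (u i + w i) ^ 2 = u i ^ 2 + w i ^ 2 + 2 * (u i * w i) := fun i => by ring
        simp_rw [QuadraticMap.polar, PiLp.add_apply, hsq, Finset.sum_add_distrib,
          ← Finset.mul_sum]
        ring
      simp_rw [h, PiLp.smul_apply, smul_eq_mul, mul_assoc, ← Finset.mul_sum]
      ring)

/-- The image in the Clifford algebra `Cl_n` of the `i`-th standard basis vector. -/
noncomputable def e {n : ℕ} (i : Fin n) : CliffordAlgebra (Q n) :=
  CliffordAlgebra.ι (Q n) (EuclideanSpace.single i 1)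


lemma e_sq {n : ℕ} (i : Fin n) : e i * e i = -1 := by
  rw [e, CliffordAlgebra.ι_sq_scalar]
  have : Q n (EuclideanSpace.single i 1) = -1 := by
    have h0 : Q n (EuclideanSpace.single i 1)
        = -∑ x, (EuclideanSpace.single i (1:ℝ) : EuclideanSpace ℝ (Fin n)) x ^ 2 := rfl
    rw [h0]
    simp [EuclideanSpace.single_apply]
  rw [this, map_neg, map_one]

lemma e_swap {n : ℕ} {i j : Fin n} (h : i < j) : e j * e i = -(e i * e j) := by
  have := CliffordAlgebra.ι_mul_ι_add_swap (Q := Q n)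
    (EuclideanSpace.single i 1) (EuclideanSpace.single j 1)
  have hp : QuadraticMap.polar (Q n) (EuclideanSpace.single i (1:ℝ)) (EuclideanSpace.single j 1) = 0 := by
    have hq : ∀ v : EuclideanSpace ℝ (Fin n), Q n v = -∑ x, v x ^ 2 := fun _ => rfl
    simp only [QuadraticMap.polar, hq, PiLp.add_apply]
    have hs : ∀ x : Fin n, ((EuclideanSpace.single i (1:ℝ) : EuclideanSpace ℝ (Fin n)) x
        + (EuclideanSpace.single j (1:ℝ) : EuclideanSpace ℝ (Fin n)) x) ^ 2
        = (EuclideanSpace.single i (1:ℝ) : EuclideanSpace ℝ (Fin n)) x ^ 2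
          + (EuclideanSpace.single j (1:ℝ) : EuclideanSpace ℝ (Fin n)) x ^ 2
          + 2 * ((EuclideanSpace.single i (1:ℝ) : EuclideanSpace ℝ (Fin n)) x
            * (EuclideanSpace.single j (1:ℝ) : EuclideanSpace ℝ (Fin n)) x) := fun x => by ring
    simp_rw [hs, Finset.sum_add_distrib]
    have : ∀ x : Fin n, (EuclideanSpace.single i (1:ℝ) : EuclideanSpace ℝ (Fin n)) x
        * (EuclideanSpace.single j (1:ℝ) : EuclideanSpace ℝ (Fin n)) x = 0 := by
      intro x
      rcases eq_or_ne x i with rfl | hx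
      · simp [EuclideanSpace.single_apply]; exact h.ne
      · simp [EuclideanSpace.single_apply, hx]
    simp [this, h.ne']
  rw [hp, map_zero] at this
  rw [e, e]
  linear_combination (norm := noncomm_ring) this

example : True := trivial

lemma e_sq' {n : ℕ} (i : Fin n) (x : CliffordAlgebra (Q n)) : e i * (e i * x) = -x := by
  rw [← mul_assoc, e_sq, neg_mul, one_mul]

lemma e_swap' {n : ℕ} {i j : Fin n} (h : i < j) (x : CliffordAlgebra (Q n)) :
    e j * (e i * x) = -(e i * (e j * x)) := by
  rw [← mul_assoc, e_swap h, neg_mul, mul_assoc]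

/-- **No invariant harmonic spinors on `L₄`.** In `Cl₄`, the element
`μ₁₂ • (e₃e₁e₂) + λ₁₂ • (e₄e₁e₂) + μ₁₃ • (e₄e₁e₃)` squares to `(μ₁₂²+λ₁₂²+μ₁₃²) • 1`;
hence it is a unit as soon as `(μ₁₂, λ₁₂, μ₁₃) ≠ (0,0,0)`. -/
theorem clifford_L4_dirac_invertible (μ₁₂ lam₁₂ μ₁₃ : ℝ) :
    (μ₁₂ • (e (2 : Fin 4) * e 0 * e 1) + lam₁₂ • (e (3 : Fin 4) * e 0 * e 1)
        + μ₁₃ • (e (3 : Fin 4) * e 0 * e 2)) ^ 2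
      = (μ₁₂ ^ 2 + lam₁₂ ^ 2 + μ₁₃ ^ 2) • (1 : CliffordAlgebra (Q 4))
    ∧ ((μ₁₂, lam₁₂, μ₁₃) ≠ ((0 : ℝ), (0 : ℝ), (0 : ℝ)) →
        IsUnit (μ₁₂ • (e (2 : Fin 4) * e 0 * e 1) + lam₁₂ • (e (3 : Fin 4) * e 0 * e 1)
          + μ₁₃ • (e (3 : Fin 4) * e 0 * e 2))) := by
  have hsq : (μ₁₂ • (e (2 : Fin 4) * e 0 * e 1) + lam₁₂ • (e (3 : Fin 4) * e 0 * e 1)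
        + μ₁₃ • (e (3 : Fin 4) * e 0 * e 2)) ^ 2
      = (μ₁₂ ^ 2 + lam₁₂ ^ 2 + μ₁₃ ^ 2) • (1 : CliffordAlgebra (Q 4)) := by
    simp only [pow_two, add_mul, mul_add, smul_mul_assoc, mul_smul_comm, smul_smul, mul_assoc]
    simp (config := { decide := true }) (disch := decide) only [e_sq, e_sq', e_swap, e_swap', mul_neg, neg_mul,
      smul_neg, mul_one, neg_neg]
    module
  refine ⟨hsq, fun hne => ?_⟩
  set D := μ₁₂ • (e (2 : Fin 4) * e 0 * e 1) + lam₁₂ • (e (3 : Fin 4) * e 0 * e 1)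
      + μ₁₃ • (e (3 : Fin 4) * e 0 * e 2) with hD
  have hs : (μ₁₂ ^ 2 + lam₁₂ ^ 2 + μ₁₃ ^ 2) ≠ 0 := by
    intro h0
    have h1 : μ₁₂ = 0 ∧ lam₁₂ = 0 ∧ μ₁₃ = 0 := by
      constructor
      · nlinarith [sq_nonneg μ₁₂, sq_nonneg lam₁₂, sq_nonneg μ₁₃]
      constructor
      · nlinarith [sq_nonneg μ₁₂, sq_nonneg lam₁₂, sq_nonneg μ₁₃]
      · nlinarith [sq_nonneg μ₁₂, sq_nonneg lam₁₂, sq_nonneg μ₁₃]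
    exact hne (by simp [h1.1, h1.2.1, h1.2.2])
  have hmul : D * ((μ₁₂ ^ 2 + lam₁₂ ^ 2 + μ₁₃ ^ 2)⁻¹ • D) = 1 := by
    rw [mul_smul_comm, ← pow_two, hsq, smul_smul, inv_mul_cancel₀ hs, one_smul]
  have hmul' : ((μ₁₂ ^ 2 + lam₁₂ ^ 2 + μ₁₃ ^ 2)⁻¹ • D) * D = 1 := by
    rw [smul_mul_assoc, ← pow_two, hsq, smul_smul, inv_mul_cancel₀ hs, one_smul]
  exact ⟨⟨D, (μ₁₂ ^ 2 + lam₁₂ ^ 2 + μ₁₃ ^ 2)⁻¹ • D, hmul, hmul'⟩, rfl⟩
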